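/- Dyadic level-set estimate: let ω be a doubling weight on ℝⁿ and B a ball. Then there is C depending only on the doubling constant such that for every x ∈ 2B, ∫_{2B} ω(B_{xu})^{−(n−1)/n} ω(u) du ≤ C ω(B)^{1/n}, where B_{xu} is the smallest ball containing x and u. -/

import Mathlib

open MeasureTheory Metric

/-- The smallest (closed) ball containing `x` and `u`. -/
noncomputable def segBall {n : ℕ} (x u : EuclideanSpace ℝ (Fin n)) :
    Set (EuclideanSpace ℝ (Fin n)) :=
  closedBall (midpoint ℝ x u) (dist x u / 2)

lemma key_ineq {p C a b : ℝ} (hp0 : 0 < p) (hp1 : p ≤ 1) (hb : 0 < b)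
    (hba : b ≤ a) (haC : a ≤ C * b) :
    b ^ (p - 1) * (a - b) ≤ p⁻¹ * C ^ (1 - p) * (a ^ p - b ^ p) := by
  have ha : 0 < a := hb.trans_le hba
  have hC : 0 < C := by nlinarith
  have hs : -1 ≤ b / a - 1 := by
    have : 0 ≤ b / a := div_nonneg hb.le ha.le
    linarith
  have hB : (b / a) ^ p ≤ 1 + p * (b / a - 1) := by
    have := rpow_one_add_le_one_add_mul_self hs hp0.le hp1
    simpa using this
  have hdiv : (b / a) ^ p = b ^ p / a ^ p := Real.div_rpow hb.le ha.le p
  have hap : (0:ℝ) < a ^ p := Real.rpow_pos_of_pos ha p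
  have h1 : b ^ p ≤ a ^ p + p * (b / a - 1) * a ^ p := by
    have := mul_le_mul_of_nonneg_right hB hap.le
    rw [hdiv, div_mul_cancel₀ _ hap.ne'] at this
    linarith
  have h2 : p * (b / a - 1) * a ^ p = -(p * (a ^ p / a) * (a - b)) := by
    field_simp
    ring
  have h3 : a ^ p / a = a ^ (p - 1) := by
    rw [Real.rpow_sub ha, Real.rpow_one]
  have h4 : p * a ^ (p - 1) * (a - b) ≤ a ^ p - b ^ p := by
    rw [h2, h3] at h1; linarith
  have h5 : C ^ (p - 1) * b ^ (p - 1) ≤ a ^ (p - 1) := by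
    rw [← Real.mul_rpow hC.le hb.le]
    exact Real.rpow_le_rpow_of_nonpos ha haC (by linarith)
  have h6 : p * (C ^ (p - 1) * b ^ (p - 1)) * (a - b) ≤ a ^ p - b ^ p := by
    refine le_trans ?_ h4
    have hab : 0 ≤ a - b := by linarith
    have := mul_le_mul_of_nonneg_right (mul_le_mul_of_nonneg_left h5 hp0.le) hab
    linarith
  have hCp : C ^ (1 - p) * C ^ (p - 1) = 1 := by
    rw [← Real.rpow_add hC]; norm_num
  calc b ^ (p - 1) * (a - b)
      = p⁻¹ * C ^ (1 - p) * (p * (C ^ (p - 1) * b ^ (p - 1)) * (a - b)) := by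
        rw [show p⁻¹ * C ^ (1 - p) * (p * (C ^ (p - 1) * b ^ (p - 1)) * (a - b))
            = (p⁻¹ * p) * ((C ^ (1 - p) * C ^ (p - 1)) * (b ^ (p - 1) * (a - b))) from by ring,
          hCp, inv_mul_cancel₀ hp0.ne', one_mul, one_mul]
    _ ≤ p⁻¹ * C ^ (1 - p) * (a ^ p - b ^ p) := by
        apply mul_le_mul_of_nonneg_left h6 (by positivity)

lemma exists_dyadic {R d : ℝ} (hd : 0 < d) (hdR : d < R) :
    ∃ k : ℕ, R / 2 ^ (k + 1) ≤ d ∧ d < R / 2 ^ k := by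
  have hR : 0 < R := hd.trans hdR
  have hex : ∃ k : ℕ, R / 2 ^ (k + 1) ≤ d := by
    obtain ⟨m, hm⟩ := pow_unbounded_of_one_lt (R / d) (y := (2:ℝ)) one_lt_two
    refine ⟨m, ?_⟩
    rw [div_le_iff₀ (by positivity)]
    rw [div_lt_iff₀ hd] at hm
    have : (2:ℝ) ^ m ≤ 2 ^ (m + 1) := by
      apply pow_le_pow_right₀ one_le_two (by omega)
    nlinarith
  classical
  refine ⟨Nat.find hex, Nat.find_spec hex, ?_⟩
  rcases Nat.eq_zero_or_pos (Nat.find hex) with h0 | hpos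
  · rw [h0]; simpa using hdR
  · have := Nat.find_min hex (m := Nat.find hex - 1) (by omega)
    have hj' : Nat.find hex - 1 + 1 = Nat.find hex := by omega
    rw [hj'] at this
    linarith [not_le.mp this]

theorem stmt_17 {n : ℕ} (hn : 0 < n) (C_d : ℝ) (hCd : 0 < C_d) :
    ∃ C > 0, ∀ ω : EuclideanSpace ℝ (Fin n) → ℝ,
      (∀ x, 0 < ω x) → LocallyIntegrable ω volume →
      -- doubling with constant C_d
      (∀ (p : EuclideanSpace ℝ (Fin n)) (R : ℝ), 0 < R →
        ∫ x in ball p (2 * R), ω x ≤ C_d * ∫ x in ball p R, ω x) →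
      ∀ (x₀ : EuclideanSpace ℝ (Fin n)) (r : ℝ), 0 < r →
      ∀ x ∈ ball x₀ (2 * r),
        (∫ u in ball x₀ (2 * r),
            (∫ z in segBall x u, ω z) ^ (-(((n : ℝ) - 1) / n)) * ω u) ≤
          C * (∫ u in ball x₀ r, ω u) ^ ((n : ℝ)⁻¹) := by
  have hn1 : (1:ℝ) ≤ (n:ℝ) := by exact_mod_cast hn
  have hn0 : (n:ℝ) ≠ 0 := by positivity
  set p : ℝ := (n:ℝ)⁻¹ with hp
  have hp0 : 0 < p := by positivity
  have hp1 : p ≤ 1 := by rw [hp]; exact inv_le_one_of_one_le₀ hn1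
  have hθ : -(((n:ℝ) - 1) / n) = p - 1 := by
    rw [hp]; field_simp; ring
  set K₁ : ℝ := ((C_d ^ 2)⁻¹) ^ (p - 1) with hK₁def
  have hK₁ : 0 < K₁ := Real.rpow_pos_of_pos (by positivity) _
  set K₂ : ℝ := p⁻¹ * C_d ^ (1 - p) with hK₂def
  have hK₂ : 0 < K₂ := by
    have := Real.rpow_pos_of_pos hCd (1 - p); positivity
  set K₃ : ℝ := (C_d ^ 3) ^ p with hK₃def
  have hK₃ : 0 < K₃ := Real.rpow_pos_of_pos (by positivity) _
  refine ⟨K₁ * K₂ * K₃, by positivity, ?_⟩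
  intro ω hωpos hloc hdoub x₀ r hr x hx
  haveI : Nontrivial (EuclideanSpace ℝ (Fin n)) := by
    refine ⟨EuclideanSpace.single (⟨0, hn⟩ : Fin n) (1:ℝ), 0, fun h => ?_⟩
    have := congrArg (fun v : EuclideanSpace ℝ (Fin n) => v (⟨0, hn⟩ : Fin n)) h
    simp [EuclideanSpace.single_apply] at this
  have hxnull : (volume : Measure (EuclideanSpace ℝ (Fin n))) {x} = 0 := measure_singleton x
  -- integrability on balls
  have hIntCB : ∀ (c : EuclideanSpace ℝ (Fin n)) (t : ℝ), IntegrableOn ω (closedBall c t) :=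
    fun c t => hloc.integrableOn_isCompact (isCompact_closedBall c t)
  have hIntB : ∀ (c : EuclideanSpace ℝ (Fin n)) (t : ℝ), IntegrableOn ω (ball c t) :=
    fun c t => (hIntCB c t).mono_set ball_subset_closedBall
  have hωae : ∀ (μ : Measure (EuclideanSpace ℝ (Fin n))), 0 ≤ᵐ[μ] ω :=
    fun μ => Filter.Eventually.of_forall (fun z => (hωpos z).le)
  set F : ℝ → ℝ := fun t => ∫ z in ball x t, ω z with hFdef
  have hFmono : Monotone F := by
    intro s t hst
    exact setIntegral_mono_set (hIntB x t) (hωae _) (HasSubset.Subset.eventuallyLE (ball_subset_ball hst))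
  have hFpos : ∀ t : ℝ, 0 < t → 0 < F t := by
    intro t ht
    rw [hFdef]
    apply (setIntegral_pos_iff_support_of_nonneg_ae (hωae _) (hIntB x t)).2
    have hsupp : Function.support ω = Set.univ := by
      ext z; simp [Function.support, (hωpos z).ne']
    rw [hsupp, Set.univ_inter]
    exact measure_ball_pos volume x ht
  -- lower bound on the integral over segBall
  have hseg : ∀ u : EuclideanSpace ℝ (Fin n), u ≠ x →
      (C_d ^ 2)⁻¹ * F (dist x u) ≤ ∫ z in segBall x u, ω z := by
    intro u hu
    set d : ℝ := dist x u with hd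
    have hdpos : 0 < d := dist_pos.2 (Ne.symm hu)
    set m := midpoint ℝ x u with hm
    have hxm : dist x m = d / 2 := by
      rw [hm, hd, dist_comm, dist_midpoint_left]
      norm_num
      ring
    have step1 : F d ≤ ∫ z in ball m (2 * d), ω z := by
      apply setIntegral_mono_set (hIntB m (2*d)) (hωae _)
      apply HasSubset.Subset.eventuallyLE
      intro z hz
      rw [mem_ball] at hz ⊢
      calc dist z m ≤ dist z x + dist x m := dist_triangle z x m
        _ < d + d / 2 := by rw [hxm]; linarith [hz]
        _ ≤ 2 * d := by linarith
    have step2 : ∫ z in ball m (2 * d), ω z ≤ C_d * ∫ z in ball m d, ω z := hdoub m d hdpos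
    have step3 : ∫ z in ball m d, ω z ≤ C_d * ∫ z in ball m (d / 2), ω z := by
      have h := hdoub m (d / 2) (by positivity)
      rw [show 2 * (d / 2) = d from by ring] at h
      exact h
    have step4 : ∫ z in ball m (d / 2), ω z ≤ ∫ z in segBall x u, ω z := by
      apply setIntegral_mono_set ?_ (hωae _)
        (HasSubset.Subset.eventuallyLE ball_subset_closedBall)
      exact hIntCB m (d / 2)
    have hI0 : 0 ≤ ∫ z in ball m (d / 2), ω z :=
      setIntegral_nonneg measurableSet_ball (fun z _ => (hωpos z).le)
    have : F d ≤ C_d ^ 2 * ∫ z in segBall x u, ω z := by nlinarith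
    have hCd2 : (0:ℝ) < C_d ^ 2 := by positivity
    rw [inv_mul_le_iff₀ hCd2]
    linarith [this]
  -- the majorant
  set h : EuclideanSpace ℝ (Fin n) → ℝ :=
    fun u => (K₁ * F (dist x u) ^ (p - 1)) * ω u with hhdef
  have hh0 : ∀ u, 0 ≤ h u := by
    intro u
    apply mul_nonneg (mul_nonneg hK₁.le (Real.rpow_nonneg ?_ _)) (hωpos u).le
    exact setIntegral_nonneg measurableSet_ball (fun z _ => (hωpos z).le)
  -- pointwise domination
  have hgh : ∀ u : EuclideanSpace ℝ (Fin n), u ≠ x →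
      (∫ z in segBall x u, ω z) ^ (p - 1) * ω u ≤ h u := by
    intro u hu
    have hdpos : 0 < dist x u := dist_pos.2 (Ne.symm hu)
    have hFd : 0 < F (dist x u) := hFpos _ hdpos
    have hlow : 0 < (C_d ^ 2)⁻¹ * F (dist x u) := by positivity
    have h1 : (∫ z in segBall x u, ω z) ^ (p - 1) ≤
        ((C_d ^ 2)⁻¹ * F (dist x u)) ^ (p - 1) :=
      Real.rpow_le_rpow_of_nonpos hlow (hseg u hu) (by linarith)
    have h2 : ((C_d ^ 2)⁻¹ * F (dist x u)) ^ (p - 1) = K₁ * F (dist x u) ^ (p - 1) := by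
      rw [Real.mul_rpow (by positivity) hFd.le]
    rw [hhdef]
    have := mul_le_mul_of_nonneg_right h1 (hωpos u).le
    rw [h2] at this
    simpa using this
  -- measurability of h
  have hmeasF : Measurable F := hFmono.measurable
  have hhaesm : AEStronglyMeasurable h (volume.restrict (ball x₀ (2 * r))) := by
    apply AEStronglyMeasurable.mul ?_ (hloc.aestronglyMeasurable.restrict)
    apply Measurable.aestronglyMeasurable
    have hmd : Measurable fun u : EuclideanSpace ℝ (Fin n) => F (dist x u) :=
      hmeasF.comp (continuous_const.dist continuous_id).measurable
    exact (hmd.pow_const (p - 1)).const_mul K₁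
  -- the dyadic decomposition
  set a : ℕ → ℝ := fun k => 4 * r / 2 ^ k with hadef
  have hapos : ∀ k, 0 < a k := fun k => by rw [hadef]; positivity
  have hastep : ∀ k, a k = 2 * a (k + 1) := by
    intro k; rw [hadef]; simp only; rw [pow_succ]; ring
  have hamono : ∀ k, a (k + 1) ≤ a k := fun k => by
    rw [hastep k]; linarith [hapos (k+1)]
  set A : ℕ → Set (EuclideanSpace ℝ (Fin n)) :=
    fun k => ball x (a k) \ ball x (a (k + 1)) with hAdef
  have hAmeas : ∀ k, MeasurableSet (A k) :=
    fun k => measurableSet_ball.diff measurableSet_ball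
  have ha0 : a 0 = 4 * r := by rw [hadef]; norm_num
  have hSsub : ball x₀ (2 * r) ⊆ ball x (a 0) := by
    intro u hu
    rw [mem_ball] at hu ⊢
    have hxx₀ : dist x x₀ < 2 * r := mem_ball.1 hx
    rw [ha0]
    calc dist u x ≤ dist u x₀ + dist x₀ x := dist_triangle u x₀ x
      _ < 2 * r + 2 * r := by rw [dist_comm x₀ x]; linarith
      _ = 4 * r := by ring
  have hcover : ball x (a 0) ⊆ {x} ∪ ⋃ k, A k := by
    intro u hu
    by_cases hux : u = x
    · exact Or.inl (by simp [hux])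
    · right
      have hdpos : 0 < dist u x := dist_pos.2 hux
      have hdlt : dist u x < 4 * r := by rw [← ha0]; exact mem_ball.1 hu
      obtain ⟨k, hk1, hk2⟩ := exists_dyadic hdpos hdlt
      refine Set.mem_iUnion.2 ⟨k, ?_, ?_⟩
      · rw [mem_ball, hadef]; exact hk2
      · rw [mem_ball, hadef]; simp only; push_neg; exact hk1
  -- the set integrals of ω over the annuli
  have hFA : ∀ k, ∫ z in A k, ω z = F (a k) - F (a (k + 1)) := by
    intro k
    rw [hAdef, hFdef]
    exact integral_diff measurableSet_ball (hIntB x (a k)) (ball_subset_ball (hamono k))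
  -- key lintegral bound
  set M : ℝ := ∫ u in ball x₀ r, ω u with hMdef
  have hM : 0 < M := by
    rw [hMdef]
    apply (setIntegral_pos_iff_support_of_nonneg_ae (hωae _) (hIntB x₀ r)).2
    have hsupp : Function.support ω = Set.univ := by
      ext z; simp [Function.support, (hωpos z).ne']
    rw [hsupp, Set.univ_inter]
    exact measure_ball_pos volume x₀ hr
  set b : ℕ → ℝ := fun k => F (a k) ^ p with hbdef
  have hbmono : ∀ k, b (k + 1) ≤ b k := by
    intro k
    exact Real.rpow_le_rpow (hFpos _ (hapos (k+1))).le (hFmono (hamono k)) hp0.le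
  have hbnonneg : ∀ k, 0 ≤ b k := fun k => Real.rpow_nonneg (hFpos _ (hapos k)).le _
  -- per-annulus bound
  have hannulus : ∀ k, (∫⁻ u in A k, ENNReal.ofReal (h u)) ≤
      ENNReal.ofReal (K₁ * K₂ * (b k - b (k + 1))) := by
    intro k
    have hFk1 : 0 < F (a (k + 1)) := hFpos _ (hapos (k+1))
    set c : ℝ := K₁ * F (a (k + 1)) ^ (p - 1) with hcdef
    have hc0 : 0 ≤ c := by
      rw [hcdef]; positivity
    have hpt : ∀ u ∈ A k, ENNReal.ofReal (h u) ≤ ENNReal.ofReal c * ENNReal.ofReal (ω u) := by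
      intro u hu
      rw [← ENNReal.ofReal_mul hc0]
      apply ENNReal.ofReal_le_ofReal
      rw [hhdef, hcdef]
      have hud : a (k + 1) ≤ dist x u := by
        have := hu.2
        rw [mem_ball] at this
        rw [dist_comm]
        exact not_lt.1 this
      have : F (dist x u) ^ (p - 1) ≤ F (a (k + 1)) ^ (p - 1) :=
        Real.rpow_le_rpow_of_nonpos hFk1 (hFmono hud) (by linarith)
      have := mul_le_mul_of_nonneg_right (mul_le_mul_of_nonneg_left this hK₁.le) (hωpos u).le
      simpa [mul_assoc] using this
    calc (∫⁻ u in A k, ENNReal.ofReal (h u))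
        ≤ ∫⁻ u in A k, ENNReal.ofReal c * ENNReal.ofReal (ω u) := by
          apply lintegral_mono_ae
          exact (ae_restrict_mem (hAmeas k)).mono hpt
      _ = ENNReal.ofReal c * ∫⁻ u in A k, ENNReal.ofReal (ω u) :=
          lintegral_const_mul' _ _ ENNReal.ofReal_ne_top
      _ = ENNReal.ofReal c * ENNReal.ofReal (F (a k) - F (a (k + 1))) := by
          rw [← ofReal_integral_eq_lintegral_ofReal
            ((hIntB x (a k)).mono_set Set.diff_subset) (hωae _), hFA k]
      _ = ENNReal.ofReal (c * (F (a k) - F (a (k + 1)))) := by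
          rw [ENNReal.ofReal_mul hc0]
      _ ≤ ENNReal.ofReal (K₁ * K₂ * (b k - b (k + 1))) := by
          apply ENNReal.ofReal_le_ofReal
          have hdoubF : F (a k) ≤ C_d * F (a (k + 1)) := by
            have := hdoub x (a (k + 1)) (hapos (k + 1))
            rw [← hastep k] at this
            exact this
          have hkey := key_ineq hp0 hp1 hFk1 (hFmono (hamono k)) hdoubF
          rw [hcdef, hbdef]
          calc K₁ * F (a (k + 1)) ^ (p - 1) * (F (a k) - F (a (k + 1)))
              = K₁ * (F (a (k + 1)) ^ (p - 1) * (F (a k) - F (a (k + 1)))) := by ring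
            _ ≤ K₁ * (p⁻¹ * C_d ^ (1 - p) * (F (a k) ^ p - F (a (k + 1)) ^ p)) :=
                mul_le_mul_of_nonneg_left hkey hK₁.le
            _ = K₁ * K₂ * (F (a k) ^ p - F (a (k + 1)) ^ p) := by rw [hK₂def]; ring
  -- summing up
  have hsum : (∑' k, ENNReal.ofReal (K₁ * K₂ * (b k - b (k + 1)))) ≤
      ENNReal.ofReal (K₁ * K₂ * b 0) := by
    have hterm : ∀ k, ENNReal.ofReal (K₁ * K₂ * (b k - b (k + 1))) =
        ENNReal.ofReal (K₁ * K₂) * ENNReal.ofReal (b k - b (k + 1)) := by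
      intro k; rw [← ENNReal.ofReal_mul (by positivity)]
    have htail : (∑' k, ENNReal.ofReal (b k - b (k + 1))) ≤ ENNReal.ofReal (b 0) := by
      rw [ENNReal.tsum_eq_iSup_sum' (fun N => Finset.range N)
        (fun t => Finset.exists_nat_subset_range t)]
      apply iSup_le
      intro N
      have heq : ∑ k ∈ Finset.range N, ENNReal.ofReal (b k - b (k + 1)) =
          ENNReal.ofReal (∑ k ∈ Finset.range N, (b k - b (k + 1))) := by
        rw [ENNReal.ofReal_sum_of_nonneg]
        intro k _
        linarith [hbmono k]
      rw [heq, Finset.sum_range_sub' b N]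
      apply ENNReal.ofReal_le_ofReal
      linarith [hbnonneg N]
    calc (∑' k, ENNReal.ofReal (K₁ * K₂ * (b k - b (k + 1))))
        = ENNReal.ofReal (K₁ * K₂) * ∑' k, ENNReal.ofReal (b k - b (k + 1)) := by
          simp_rw [hterm]; rw [ENNReal.tsum_mul_left]
      _ ≤ ENNReal.ofReal (K₁ * K₂) * ENNReal.ofReal (b 0) := by gcongr
      _ = ENNReal.ofReal (K₁ * K₂ * b 0) := by
          rw [← ENNReal.ofReal_mul (by positivity)]
  -- the main lintegral bound
  have hL : (∫⁻ u in ball x₀ (2 * r), ENNReal.ofReal (h u)) ≤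
      ENNReal.ofReal (K₁ * K₂ * b 0) := by
    calc (∫⁻ u in ball x₀ (2 * r), ENNReal.ofReal (h u))
        ≤ ∫⁻ u in {x} ∪ ⋃ k, A k, ENNReal.ofReal (h u) :=
          lintegral_mono_set (hSsub.trans hcover)
      _ ≤ (∫⁻ u in ({x} : Set _), ENNReal.ofReal (h u)) +
            ∫⁻ u in ⋃ k, A k, ENNReal.ofReal (h u) := lintegral_union_le _ _ _
      _ ≤ 0 + ∑' k, ∫⁻ u in A k, ENNReal.ofReal (h u) := by
          apply add_le_add
          · rw [Measure.restrict_eq_zero.2 hxnull, lintegral_zero_measure]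
          · exact lintegral_iUnion_le _ _
      _ ≤ ∑' k, ENNReal.ofReal (K₁ * K₂ * (b k - b (k + 1))) := by
          rw [zero_add]
          exact ENNReal.tsum_le_tsum hannulus
      _ ≤ ENNReal.ofReal (K₁ * K₂ * b 0) := hsum
  -- bound b 0
  have hb0 : b 0 ≤ K₃ * M ^ p := by
    have h8 : F (a 0) ≤ ∫ u in ball x₀ (2 * (4 * r)), ω u := by
      rw [hFdef]
      apply setIntegral_mono_set (hIntB x₀ (2 * (4 * r))) (hωae _)
      apply HasSubset.Subset.eventuallyLE
      intro u hu
      rw [mem_ball] at hu ⊢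
      have hxx₀ : dist x x₀ < 2 * r := mem_ball.1 hx
      rw [ha0] at hu
      calc dist u x₀ ≤ dist u x + dist x x₀ := dist_triangle u x x₀
        _ < 4 * r + 2 * r := by linarith
        _ ≤ 2 * (4 * r) := by linarith
    have h4 : ∫ u in ball x₀ (2 * (4 * r)), ω u ≤ C_d * ∫ u in ball x₀ (4 * r), ω u :=
      hdoub x₀ (4 * r) (by positivity)
    have h2 : ∫ u in ball x₀ (4 * r), ω u ≤ C_d * ∫ u in ball x₀ (2 * r), ω u := by
      have := hdoub x₀ (2 * r) (by positivity)
      rw [show 2 * (2 * r) = 4 * r from by ring] at this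
      exact this
    have h1 : ∫ u in ball x₀ (2 * r), ω u ≤ C_d * M := hdoub x₀ r hr
    have hFa0 : F (a 0) ≤ C_d ^ 3 * M := by nlinarith
    rw [hbdef, hK₃def]
    calc F (a 0) ^ p ≤ (C_d ^ 3 * M) ^ p :=
        Real.rpow_le_rpow (hFpos _ (hapos 0)).le hFa0 hp0.le
      _ = (C_d ^ 3) ^ p * M ^ p := Real.mul_rpow (by positivity) hM.le
  -- integrability of h on the ball
  have hLfin : (∫⁻ u in ball x₀ (2 * r), ENNReal.ofReal (h u)) < ⊤ :=
    lt_of_le_of_lt hL ENNReal.ofReal_lt_top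
  have hhint : Integrable h (volume.restrict (ball x₀ (2 * r))) := by
    refine ⟨hhaesm, ?_⟩
    rw [hasFiniteIntegral_iff_ofReal (Filter.Eventually.of_forall hh0)]
    exact hLfin
  -- comparison of the integrals
  rw [hθ]
  have hmain : (∫ u in ball x₀ (2 * r), (∫ z in segBall x u, ω z) ^ (p - 1) * ω u) ≤
      ∫ u in ball x₀ (2 * r), h u := by
    apply integral_mono_of_nonneg ?_ hhint ?_
    · apply Filter.Eventually.of_forall
      intro u
      apply mul_nonneg (Real.rpow_nonneg ?_ _) (hωpos u).le
      exact setIntegral_nonneg measurableSet_closedBall (fun z _ => (hωpos z).le)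
    · apply ae_restrict_of_ae
      show ∀ᵐ u ∂(volume : Measure (EuclideanSpace ℝ (Fin n))),
        (∫ z in segBall x u, ω z) ^ (p - 1) * ω u ≤ h u
      rw [ae_iff]
      apply measure_mono_null ?_ hxnull
      intro u hu
      simp only [Set.mem_setOf_eq] at hu
      simp only [Set.mem_singleton_iff]
      by_contra hne
      exact hu (hgh u hne)
  have hIv : (∫ u in ball x₀ (2 * r), h u) ≤ K₁ * K₂ * b 0 := by
    rw [integral_eq_lintegral_of_nonneg_ae (Filter.Eventually.of_forall hh0) hhaesm]
    exact ENNReal.toReal_le_of_le_ofReal (mul_nonneg (mul_nonneg hK₁.le hK₂.le) (hbnonneg 0)) hL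
  calc (∫ u in ball x₀ (2 * r), (∫ z in segBall x u, ω z) ^ (p - 1) * ω u)
      ≤ K₁ * K₂ * b 0 := hmain.trans hIv
    _ ≤ K₁ * K₂ * (K₃ * M ^ p) := by
        apply mul_le_mul_of_nonneg_left hb0 (by positivity)
    _ = K₁ * K₂ * K₃ * M ^ p := by ring
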